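/- arXiv:2604.26641 — 11 statements merged into one kernel-verified Lean document; each statement's English description precedes it below -/
import Mathlib

section
/- Let U ⊆ ℂ be a nonempty open set, λ ∈ ℂ with λ ≠ 0, and let k₂, k₄, k₆ : ℂ → ℂ be holomorphic on U and satisfy D k₂ = (λ/2)·k₄ and D k₄ = (3λ/4)·k₆ on U, where D denotes the scaled derivative D f = (2πi)⁻¹·f′. Then the third equation of the dynamical system, D k₆ = (λ/4)·(k₄² − k₂k₆), holds on U if and only if the function y := −(λ/4)·k₂ satisfies the Chazy III equation D³y = y·D²y − (3/2)·(Dy)² on U. -/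
/-- The scaled derivative `D f = (2πi)⁻¹ · f′`. -/
noncomputable def D (f : ℂ → ℂ) : ℂ → ℂ :=
  fun z => (2 * (Real.pi : ℂ) * Complex.I)⁻¹ * deriv f z

theorem stmt_0 (U : Set ℂ) (hUopen : IsOpen U) (hUne : U.Nonempty)
    (lam : ℂ) (hlam : lam ≠ 0) (k₂ k₄ k₆ : ℂ → ℂ)
    (hk₂ : DifferentiableOn ℂ k₂ U) (hk₄ : DifferentiableOn ℂ k₄ U)
    (hk₆ : DifferentiableOn ℂ k₆ U)
    (heq2 : ∀ z ∈ U, D k₂ z = lam / 2 * k₄ z)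
    (heq4 : ∀ z ∈ U, D k₄ z = 3 * lam / 4 * k₆ z) :
    (∀ z ∈ U, D k₆ z = lam / 4 * (k₄ z ^ 2 - k₂ z * k₆ z)) ↔
      (∀ z ∈ U,
        D (D (D (fun w => -(lam / 4) * k₂ w))) z =
          (-(lam / 4) * k₂ z) * D (D (fun w => -(lam / 4) * k₂ w)) z
            - 3 / 2 * (D (fun w => -(lam / 4) * k₂ w) z) ^ 2) := by
  have hDcongr : ∀ (f g : ℂ → ℂ), (∀ w ∈ U, f w = g w) → ∀ z ∈ U, D f z = D g z := by
    intro f g h z hz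
    have hfg : f =ᶠ[nhds z] g := Filter.eventuallyEq_of_mem (hUopen.mem_nhds hz) h
    simp [D, hfg.deriv_eq]
  set y : ℂ → ℂ := fun w => -(lam / 4) * k₂ w with hy
  have h1 : ∀ z ∈ U, D y z = -(lam ^ 2 / 8) * k₄ z := by
    intro z hz
    have hd : DifferentiableAt ℂ k₂ z := hk₂.differentiableAt (hUopen.mem_nhds hz)
    have : D y z = -(lam / 4) * D k₂ z := by
      simp [D, hy, deriv_const_mul _ hd]; ring
    rw [this, heq2 z hz]; ring
  have h2 : ∀ z ∈ U, D (D y) z = -(3 * lam ^ 3 / 32) * k₆ z := by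
    intro z hz
    rw [hDcongr (D y) (fun w => -(lam ^ 2 / 8) * k₄ w) h1 z hz]
    have hd : DifferentiableAt ℂ k₄ z := hk₄.differentiableAt (hUopen.mem_nhds hz)
    have : D (fun w => -(lam ^ 2 / 8) * k₄ w) z = -(lam ^ 2 / 8) * D k₄ z := by
      simp [D, deriv_const_mul _ hd]; ring
    rw [this, heq4 z hz]; ring
  have h3 : ∀ z ∈ U, D (D (D y)) z = -(3 * lam ^ 3 / 32) * D k₆ z := by
    intro z hz
    rw [hDcongr (D (D y)) (fun w => -(3 * lam ^ 3 / 32) * k₆ w) h2 z hz]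
    have hd : DifferentiableAt ℂ k₆ z := hk₆.differentiableAt (hUopen.mem_nhds hz)
    simp [D, deriv_const_mul _ hd]; ring
  have hcoef : (-(3 * lam ^ 3 / 32) : ℂ) ≠ 0 := by
    simp [pow_eq_zero_iff, hlam]
  constructor
  · intro h z hz
    rw [h3 z hz, h2 z hz, h1 z hz, h z hz]
    show _ = (-(lam / 4) * k₂ z) * _ - _
    ring
  · intro h z hz
    have hz' := h z hz
    rw [h3 z hz, h2 z hz, h1 z hz] at hz'
    refine mul_left_cancel₀ hcoef ?_
    rw [hz']; ring
end

section
/- Let φ : ℂ → ℂ be holomorphic and define f : ℂ × ℂ → ℂ by f(x,y) = −x⁴·φ(y)/96. Let a = ∂³f/∂x²∂y, b = ∂³f/∂x³, c = ∂³f/∂x∂y², d = ∂³f/∂y³ (iterated partial derivatives of f). Then the associativity condition a(x,y)² − d(x,y) − b(x,y)·c(x,y) = 0 holds for all (x,y) ∈ ℂ × ℂ if and only if φ satisfies the Chazy III equation φ′′′(y) = φ(y)·φ′′(y) − (3/2)·φ′(y)² for all y ∈ ℂ. -/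
/-- Partial derivative in the first variable of a function of two complex variables. -/
noncomputable def pderivX (g : ℂ → ℂ → ℂ) : ℂ → ℂ → ℂ :=
  fun x y => deriv (fun x' => g x' y) x

/-- Partial derivative in the second variable of a function of two complex variables. -/
noncomputable def pderivY (g : ℂ → ℂ → ℂ) : ℂ → ℂ → ℂ :=
  fun x y => deriv (fun y' => g x y') y

theorem stmt_1 (φ : ℂ → ℂ) (hφ : Differentiable ℂ φ)
    (f : ℂ → ℂ → ℂ) (hf : f = fun x y => -(x ^ 4) * φ y / 96) :
    -- a = f_xxy, b = f_xxx, c = f_xyy, d = f_yyy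
    (∀ x y : ℂ,
        (pderivX (pderivX (pderivY f)) x y) ^ 2
          - pderivY (pderivY (pderivY f)) x y
          - pderivX (pderivX (pderivX f)) x y * pderivY (pderivY (pderivX f)) x y = 0) ↔
      (∀ y : ℂ, deriv (deriv (deriv φ)) y
          = φ y * deriv (deriv φ) y - 3 / 2 * (deriv φ y) ^ 2) := by
  subst hf
  -- y-derivatives of f
  have hY : pderivY (fun x y => -(x ^ 4) * φ y / 96)
      = fun x y => -(x ^ 4) * deriv φ y / 96 := by
    funext x y; simp [pderivY, deriv_div_const, deriv_const_mul_field]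
  have hYY : pderivY (pderivY (fun x y => -(x ^ 4) * φ y / 96))
      = fun x y => -(x ^ 4) * deriv (deriv φ) y / 96 := by
    rw [hY]; funext x y; simp [pderivY, deriv_div_const, deriv_const_mul_field]
  have hYYY : pderivY (pderivY (pderivY (fun x y => -(x ^ 4) * φ y / 96)))
      = fun x y => -(x ^ 4) * deriv (deriv (deriv φ)) y / 96 := by
    rw [hYY]; funext x y; simp [pderivY, deriv_div_const, deriv_const_mul_field]
  -- x-derivatives
  have hXgen : ∀ (c : ℂ → ℂ) (k : ℂ), pderivX (fun x y => -(x ^ 4) * c y / k)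
      = fun x y => -(4 * x ^ 3) * c y / k := by
    intro c k; funext x y; simp [pderivX, deriv_div_const, deriv_mul_const_field]
  have hX : pderivX (fun x y => -(x ^ 4) * φ y / 96)
      = fun x y => -(x ^ 3) * φ y / 24 := by
    rw [hXgen]; funext x y; ring
  have hXX : pderivX (pderivX (fun x y => -(x ^ 4) * φ y / 96))
      = fun x y => -(x ^ 2) * φ y / 8 := by
    rw [hX]; funext x y; simp [pderivX, deriv_div_const, deriv_mul_const_field]; ring
  have hXXX : pderivX (pderivX (pderivX (fun x y => -(x ^ 4) * φ y / 96)))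
      = fun x y => -x * φ y / 4 := by
    rw [hXX]; funext x y; simp [pderivX, deriv_div_const, deriv_mul_const_field]; ring
  -- a = pderivX (pderivX (pderivY f))
  have ha : pderivX (pderivX (pderivY (fun x y => -(x ^ 4) * φ y / 96)))
      = fun x y => -(x ^ 2) * deriv φ y / 8 := by
    rw [hY]
    have h1 : pderivX (fun x y => -(x ^ 4) * deriv φ y / 96)
        = fun x y => -(x ^ 3) * deriv φ y / 24 := by
      funext x y; simp [pderivX, deriv_div_const, deriv_mul_const_field]; ring
    rw [h1]; funext x y; simp [pderivX, deriv_div_const, deriv_mul_const_field]; ring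
  -- c = pderivY (pderivY (pderivX f))
  have hc : pderivY (pderivY (pderivX (fun x y => -(x ^ 4) * φ y / 96)))
      = fun x y => -(x ^ 3) * deriv (deriv φ) y / 24 := by
    rw [hX]
    have h1 : pderivY (fun x y => -(x ^ 3) * φ y / 24)
        = fun x y => -(x ^ 3) * deriv φ y / 24 := by
      funext x y; simp [pderivY, deriv_div_const, deriv_const_mul_field]
    rw [h1]; funext x y; simp [pderivY, deriv_div_const, deriv_const_mul_field]
  rw [ha, hYYY, hXXX, hc]
  constructor
  · intro h y
    have := h 1 y
    linear_combination 96 * this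
  · intro h x y
    linear_combination (x ^ 4 / 96) * h y
end

section
/- Let K be a commutative ring and a, b, c, d ∈ K. Consider the free K-module K³ with basis e₁, e₂, e₃ and the commutative K-bilinear multiplication determined by: e₁ is a two-sided unit (e₁·x = x·e₁ = x for all x), e₂·e₂ = a·e₁ + b·e₂ + e₃, e₂·e₃ = e₃·e₂ = c·e₁ + a·e₂, and e₃·e₃ = d·e₁ + c·e₂. Then this multiplication is associative (i.e. (x·y)·z = x·(y·z) for all x, y, z ∈ K³) if and only if a² − d − bc = 0 in K. -/
theorem stmt_3 (K : Type*) [CommRing K] (a b c d : K)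
    (mul : (Fin 3 → K) →ₗ[K] (Fin 3 → K) →ₗ[K] (Fin 3 → K))
    (e₁ e₂ e₃ : Fin 3 → K)
    (he₁ : e₁ = Pi.single 0 1) (he₂ : e₂ = Pi.single 1 1) (he₃ : e₃ = Pi.single 2 1)
    (hcomm : ∀ x y, mul x y = mul y x)
    (hunitl : ∀ x, mul e₁ x = x) (hunitr : ∀ x, mul x e₁ = x)
    (h22 : mul e₂ e₂ = a • e₁ + b • e₂ + e₃)
    (h23 : mul e₂ e₃ = c • e₁ + a • e₂)
    (h32 : mul e₃ e₂ = c • e₁ + a • e₂)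
    (h33 : mul e₃ e₃ = d • e₁ + c • e₂) :
    (∀ x y z, mul (mul x y) z = mul x (mul y z)) ↔ a ^ 2 - d - b * c = 0 := by
  constructor
  · intro hassoc
    have h1 : mul (mul e₂ e₂) e₃ = mul e₂ (mul e₂ e₃) := hassoc e₂ e₂ e₃
    rw [h22, h23] at h1
    simp only [map_add, map_smul, LinearMap.add_apply, LinearMap.smul_apply,
      h22, h23, h32, h33, hunitl, hunitr] at h1
    have h2 := congrFun h1 0
    subst he₁ he₂ he₃
    simp [Pi.single_apply] at h2
    linear_combination -h2
  · intro h
    have hd : d = a ^ 2 - b * c := by linear_combination -h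
    subst hd
    have hx : ∀ x : Fin 3 → K, x = x 0 • e₁ + x 1 • e₂ + x 2 • e₃ := by
      intro x
      subst he₁ he₂ he₃
      funext i
      fin_cases i <;> simp [Pi.single_apply]
    intro x y z
    rw [hx x, hx y, hx z]
    simp only [map_add, map_smul, LinearMap.add_apply, LinearMap.smul_apply,
      h22, h23, h32, h33, hunitl, hunitr, smul_add]
    module
end

section
/- Let K = ℤ[a,b,c,d] be the polynomial ring over ℤ in four variables a, b, c, d, and let I be an ideal of K with quotient L = K/I. Consider the free L-module L³ with basis e₁, e₂, e₃ and the commutative L-bilinear multiplication determined by the images of a, b, c, d in L via: e₁ a two-sided unit, e₂·e₂ = a·e₁ + b·e₂ + e₃, e₂·e₃ = e₃·e₂ = c·e₁ + a·e₂, e₃·e₃ = d·e₁ + c·e₂. Then this multiplication on L³ is associative if and only if the polynomial a² − d − bc belongs to I. In particular, the principal ideal (a² − d − bc) is the minimal ideal I of K (with respect to inclusion) for which the algebra over K/I is associative. -/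
open MvPolynomial

/-- The quotient `L = ℤ[a,b,c,d]/I`. -/
abbrev Lq (I : Ideal (MvPolynomial (Fin 4) ℤ)) : Type :=
  MvPolynomial (Fin 4) ℤ ⧸ I

set_option maxHeartbeats 2000000 in
set_option synthInstance.maxHeartbeats 400000 in
theorem stmt_4 (I : Ideal (MvPolynomial (Fin 4) ℤ))
    (a b c d : Lq I)
    (ha : a = Ideal.Quotient.mk I (X 0)) (hb : b = Ideal.Quotient.mk I (X 1))
    (hc : c = Ideal.Quotient.mk I (X 2)) (hd : d = Ideal.Quotient.mk I (X 3))
    (mul : (Fin 3 → Lq I) →ₗ[Lq I] (Fin 3 → Lq I) →ₗ[Lq I] (Fin 3 → Lq I))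
    (e₁ e₂ e₃ : Fin 3 → Lq I)
    (he₁ : e₁ = Pi.single 0 1) (he₂ : e₂ = Pi.single 1 1) (he₃ : e₃ = Pi.single 2 1)
    (hcomm : ∀ x y, mul x y = mul y x)
    (hunitl : ∀ x, mul e₁ x = x) (hunitr : ∀ x, mul x e₁ = x)
    (h22 : mul e₂ e₂ = a • e₁ + b • e₂ + e₃)
    (h23 : mul e₂ e₃ = c • e₁ + a • e₂)
    (h32 : mul e₃ e₂ = c • e₁ + a • e₂)
    (h33 : mul e₃ e₃ = d • e₁ + c • e₂) :
    (∀ x y z, mul (mul x y) z = mul x (mul y z)) ↔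
      (X 0 : MvPolynomial (Fin 4) ℤ) ^ 2 - X 3 - X 1 * X 2 ∈ I := by
  have hmem : ((X 0 : MvPolynomial (Fin 4) ℤ) ^ 2 - X 3 - X 1 * X 2 ∈ I) ↔
      a ^ 2 = d + b * c := by
    rw [← Ideal.Quotient.eq_zero_iff_mem, map_sub, map_sub, map_pow, map_mul,
      ← ha, ← hb, ← hc, ← hd, sub_sub, sub_eq_zero, eq_comm]
  rw [hmem]
  constructor
  · intro hassoc
    have h := hassoc e₂ e₂ e₃
    rw [h22, h23] at h
    simp only [map_add, LinearMap.map_smul₂, map_smul, LinearMap.add_apply, LinearMap.smul_apply,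
      hunitl, hunitr, h22, h23, h32, h33, hcomm e₃ e₂] at h
    have h0 := congrFun h 0
    simp [he₁, he₂, he₃, Pi.single_apply] at h0
    linear_combination -h0
  · intro hsq
    intro x y z
    have hdec : ∀ w : Fin 3 → Lq I, w = w 0 • e₁ + w 1 • e₂ + w 2 • e₃ := by
      intro w
      ext j
      fin_cases j <;> simp [he₁, he₂, he₃, Pi.single_apply]
    rw [hdec x, hdec y, hdec z]
    simp only [map_add, LinearMap.map_smul₂, map_smul, LinearMap.add_apply, LinearMap.smul_apply,
      h22, h23, h32, h33, hunitl, hunitr, smul_add]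
    match_scalars
    · linear_combination (x 2 * y 1 * z 1 - x 1 * y 1 * z 2) * hsq
    · linear_combination (x 1 * y 2 * z 2 - x 2 * y 2 * z 1) * hsq
    · ring
end

section
/- Let t₁, t₂, t₃ ∈ ℂ with Δ := 27t₃² − t₂³ ≠ 0. For F₁, F₂, F₃ ∈ ℂ set θ(v) := 3t₃F₂ − 2t₂F₃ and dΔ(v) := 54t₃F₃ − 3t₂²F₂. Then the horizontality conditions for the Gauss–Manin connection matrix, namely the four equations −(3/2)t₁·θ(v) − (1/12)·dΔ(v) = 0, (3/2)·θ(v) = −Δ, Δ·F₁ − (1/6)t₁·dΔ(v) − ((3/2)t₁² + (1/8)t₂)·θ(v) = 0, and (3/2)t₁·θ(v) + (1/12)·dΔ(v) = 0, hold if and only if F₁ = t₁² − (1/12)t₂, F₂ = 4t₁t₂ − 6t₃, and F₃ = 6t₁t₃ − (1/3)t₂². In particular, for each point (t₁,t₂,t₃) with Δ ≠ 0 there exists a unique vector (F₁,F₂,F₃) satisfying these equations. -/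
theorem stmt_6 (t₁ t₂ t₃ : ℂ) (hΔ : 27 * t₃ ^ 2 - t₂ ^ 3 ≠ 0) :
    (∀ F₁ F₂ F₃ : ℂ,
      (-(3 / 2) * t₁ * (3 * t₃ * F₂ - 2 * t₂ * F₃)
            - 1 / 12 * (54 * t₃ * F₃ - 3 * t₂ ^ 2 * F₂) = 0 ∧
        3 / 2 * (3 * t₃ * F₂ - 2 * t₂ * F₃) = -(27 * t₃ ^ 2 - t₂ ^ 3) ∧
        (27 * t₃ ^ 2 - t₂ ^ 3) * F₁
            - 1 / 6 * t₁ * (54 * t₃ * F₃ - 3 * t₂ ^ 2 * F₂)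
            - (3 / 2 * t₁ ^ 2 + 1 / 8 * t₂) * (3 * t₃ * F₂ - 2 * t₂ * F₃) = 0 ∧
        3 / 2 * t₁ * (3 * t₃ * F₂ - 2 * t₂ * F₃)
            + 1 / 12 * (54 * t₃ * F₃ - 3 * t₂ ^ 2 * F₂) = 0) ↔
      (F₁ = t₁ ^ 2 - 1 / 12 * t₂ ∧ F₂ = 4 * t₁ * t₂ - 6 * t₃ ∧
        F₃ = 6 * t₁ * t₃ - 1 / 3 * t₂ ^ 2)) ∧
    (∃! F : ℂ × ℂ × ℂ,
      -(3 / 2) * t₁ * (3 * t₃ * F.2.1 - 2 * t₂ * F.2.2)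
            - 1 / 12 * (54 * t₃ * F.2.2 - 3 * t₂ ^ 2 * F.2.1) = 0 ∧
        3 / 2 * (3 * t₃ * F.2.1 - 2 * t₂ * F.2.2) = -(27 * t₃ ^ 2 - t₂ ^ 3) ∧
        (27 * t₃ ^ 2 - t₂ ^ 3) * F.1
            - 1 / 6 * t₁ * (54 * t₃ * F.2.2 - 3 * t₂ ^ 2 * F.2.1)
            - (3 / 2 * t₁ ^ 2 + 1 / 8 * t₂) * (3 * t₃ * F.2.1 - 2 * t₂ * F.2.2) = 0 ∧
        3 / 2 * t₁ * (3 * t₃ * F.2.1 - 2 * t₂ * F.2.2)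
            + 1 / 12 * (54 * t₃ * F.2.2 - 3 * t₂ ^ 2 * F.2.1) = 0) := by

  have key : ∀ F₁ F₂ F₃ : ℂ,
      (-(3 / 2) * t₁ * (3 * t₃ * F₂ - 2 * t₂ * F₃)
            - 1 / 12 * (54 * t₃ * F₃ - 3 * t₂ ^ 2 * F₂) = 0 ∧
        3 / 2 * (3 * t₃ * F₂ - 2 * t₂ * F₃) = -(27 * t₃ ^ 2 - t₂ ^ 3) ∧
        (27 * t₃ ^ 2 - t₂ ^ 3) * F₁
            - 1 / 6 * t₁ * (54 * t₃ * F₃ - 3 * t₂ ^ 2 * F₂)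
            - (3 / 2 * t₁ ^ 2 + 1 / 8 * t₂) * (3 * t₃ * F₂ - 2 * t₂ * F₃) = 0 ∧
        3 / 2 * t₁ * (3 * t₃ * F₂ - 2 * t₂ * F₃)
            + 1 / 12 * (54 * t₃ * F₃ - 3 * t₂ ^ 2 * F₂) = 0) ↔
      (F₁ = t₁ ^ 2 - 1 / 12 * t₂ ∧ F₂ = 4 * t₁ * t₂ - 6 * t₃ ∧
        F₃ = 6 * t₁ * t₃ - 1 / 3 * t₂ ^ 2) := by
    intro F₁ F₂ F₃
    constructor
    · rintro ⟨h1, h2, h3, h4⟩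
      have hF₂ : F₂ = 4 * t₁ * t₂ - 6 * t₃ := by
        apply mul_left_cancel₀ hΔ
        linear_combination (6 * t₃ - 4 * t₁ * t₂) * h2 + 4 * t₂ * h4
      have hF₃ : F₃ = 6 * t₁ * t₃ - 1 / 3 * t₂ ^ 2 := by
        apply mul_left_cancel₀ hΔ
        linear_combination (t₂ ^ 2 / 3 - 6 * t₁ * t₃) * h2 + 6 * t₃ * h4
      have hF₁ : F₁ = t₁ ^ 2 - 1 / 12 * t₂ := by
        apply mul_left_cancel₀ hΔ
        subst hF₂ hF₃
        linear_combination h3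
      exact ⟨hF₁, hF₂, hF₃⟩
    · rintro ⟨h1, h2, h3⟩
      subst h1 h2 h3
      refine ⟨by ring, by ring, by ring, by ring⟩
  refine ⟨key, ⟨(t₁ ^ 2 - 1 / 12 * t₂, 4 * t₁ * t₂ - 6 * t₃, 6 * t₁ * t₃ - 1 / 3 * t₂ ^ 2),
    (key _ _ _).mpr ⟨rfl, rfl, rfl⟩, ?_⟩⟩
  rintro ⟨a, b, c⟩ h
  obtain ⟨h1, h2, h3⟩ := (key a b c).mp h
  simp [h1, h2, h3, Prod.ext_iff]
end

section
/- Let Ω ⊆ ℂ be open, let y : ℂ → ℂ be holomorphic on Ω and satisfy the Chazy equation y′′′ = 2y·y′′ − 3(y′)² on Ω. Let g = (a, b; c, d) be a matrix with complex entries and determinant ad − bc = 1. Define ỹ(τ) := (cτ+d)⁻²·y((aτ+b)/(cτ+d)) − 6c/(cτ+d) on the open set Ω′ := {τ ∈ ℂ : cτ + d ≠ 0 and (aτ+b)/(cτ+d) ∈ Ω}. Then ỹ is holomorphic on Ω′ and satisfies ỹ′′′ = 2ỹ·ỹ′′ − 3(ỹ′)² on Ω′. -/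
private lemma hasDerivAt_mob (a b c d : ℂ) (hdet : a * d - b * c = 1) (τ : ℂ)
    (h : c * τ + d ≠ 0) :
    HasDerivAt (fun σ : ℂ => (a * σ + b) / (c * σ + d)) (((c * τ + d)⁻¹) ^ 2) τ := by
  have hn : HasDerivAt (fun σ : ℂ => a * σ + b) a τ := by
    simpa using ((hasDerivAt_id τ).const_mul a).add_const b
  have hd : HasDerivAt (fun σ : ℂ => c * σ + d) c τ := by
    simpa using ((hasDerivAt_id τ).const_mul c).add_const d
  refine (hn.div hd h).congr_deriv ?_
  field_simp
  linear_combination hdet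

private lemma hasDerivAt_P (c d K : ℂ) (k : ℕ) (τ : ℂ) (h : c * τ + d ≠ 0) :
    HasDerivAt (fun σ : ℂ => K * ((c * σ + d)⁻¹) ^ (k + 1))
      (-(((k : ℂ) + 1) * c * K * ((c * τ + d)⁻¹) ^ (k + 2))) τ := by
  have hd : HasDerivAt (fun σ : ℂ => c * σ + d) c τ := by
    simpa using ((hasDerivAt_id τ).const_mul c).add_const d
  have hv : HasDerivAt (fun σ : ℂ => (c * σ + d)⁻¹) (-c / (c * τ + d) ^ 2) τ := hd.inv h
  refine ((hv.pow (k + 1)).const_mul K).congr_deriv ?_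
  have : ((k:ℕ) + 1 - 1) = k := rfl
  rw [this]
  push_cast
  simp only [div_eq_mul_inv, ← inv_pow]
  ring

private lemma hasDerivAt_T (a b c d : ℂ) (hdet : a * d - b * c = 1)
    (K : ℂ) (k : ℕ) (F G : ℂ → ℂ) (τ : ℂ) (h : c * τ + d ≠ 0)
    (hF : HasDerivAt F (G ((a * τ + b) / (c * τ + d))) ((a * τ + b) / (c * τ + d))) :
    HasDerivAt (fun σ : ℂ => K * ((c * σ + d)⁻¹) ^ (k + 1) * F ((a * σ + b) / (c * σ + d)))
      (K * ((c * τ + d)⁻¹) ^ (k + 3) * G ((a * τ + b) / (c * τ + d))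
        - ((k : ℂ) + 1) * c * K * ((c * τ + d)⁻¹) ^ (k + 2)
          * F ((a * τ + b) / (c * τ + d))) τ := by
  have hφ := hasDerivAt_mob a b c d hdet τ h
  have hcomp := hF.comp τ hφ
  have hp := hasDerivAt_P c d K k τ h
  refine (hp.mul hcomp).congr_deriv ?_
  simp only [Function.comp_apply]
  ring

theorem stmt_7 (Ω : Set ℂ) (hΩ : IsOpen Ω) (y : ℂ → ℂ)
    (hy : DifferentiableOn ℂ y Ω)
    (hchazy : ∀ τ ∈ Ω, deriv (deriv (deriv y)) τ
        = 2 * y τ * deriv (deriv y) τ - 3 * (deriv y τ) ^ 2)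
    (a b c d : ℂ) (hdet : a * d - b * c = 1)
    (ytil : ℂ → ℂ)
    (hytil : ytil = fun τ => ((c * τ + d) ^ 2)⁻¹ * y ((a * τ + b) / (c * τ + d))
        - 6 * c / (c * τ + d))
    (Ω' : Set ℂ)
    (hΩ' : Ω' = {τ : ℂ | c * τ + d ≠ 0 ∧ (a * τ + b) / (c * τ + d) ∈ Ω}) :
    DifferentiableOn ℂ ytil Ω' ∧
      ∀ τ ∈ Ω', deriv (deriv (deriv ytil)) τ
          = 2 * ytil τ * deriv (deriv ytil) τ - 3 * (deriv ytil τ) ^ 2 := by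
  -- abbreviations
  set φ : ℂ → ℂ := fun σ => (a * σ + b) / (c * σ + d) with hφdef
  set v : ℂ → ℂ := fun σ => (c * σ + d)⁻¹ with hvdef
  set Y1 : ℂ → ℂ := deriv y with hY1def
  set Y2 : ℂ → ℂ := deriv Y1 with hY2def
  set Y3 : ℂ → ℂ := deriv Y2 with hY3def
  -- analyticity
  have hA : AnalyticOnNhd ℂ y Ω := hy.analyticOnNhd hΩ
  have hA1 : AnalyticOnNhd ℂ Y1 Ω := hA.deriv
  have hA2 : AnalyticOnNhd ℂ Y2 Ω := hA1.deriv
  -- openness of Ω'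
  have hU : IsOpen {τ : ℂ | c * τ + d ≠ 0} := by
    have : {τ : ℂ | c * τ + d ≠ 0} = (fun τ : ℂ => c * τ + d) ⁻¹' {0}ᶜ := rfl
    rw [this]
    exact isOpen_compl_singleton.preimage (by fun_prop)
  have hopen' : IsOpen Ω' := by
    have hcont : ContinuousOn φ {τ : ℂ | c * τ + d ≠ 0} :=
      ContinuousOn.div (by fun_prop) (by fun_prop) (fun τ hτ => hτ)
    have : Ω' = {τ : ℂ | c * τ + d ≠ 0} ∩ φ ⁻¹' Ω := by
      rw [hΩ']; rfl
    rw [this]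
    exact hcont.isOpen_inter_preimage hU hΩ
  -- the explicit derivative formulas
  set g0 : ℂ → ℂ := fun σ => 1 * v σ ^ 2 * y (φ σ) + -(6 * c) * v σ ^ 1 with hg0
  set g1 : ℂ → ℂ := fun σ => 1 * v σ ^ 4 * Y1 (φ σ) + -(2 * c) * v σ ^ 3 * y (φ σ)
      + 6 * c ^ 2 * v σ ^ 2 with hg1
  set g2 : ℂ → ℂ := fun σ => 1 * v σ ^ 6 * Y2 (φ σ) + -(6 * c) * v σ ^ 5 * Y1 (φ σ)
      + 6 * c ^ 2 * v σ ^ 4 * y (φ σ) + -(12 * c ^ 3) * v σ ^ 3 with hg2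
  set g3 : ℂ → ℂ := fun σ => 1 * v σ ^ 8 * Y3 (φ σ) + -(12 * c) * v σ ^ 7 * Y2 (φ σ)
      + 36 * c ^ 2 * v σ ^ 6 * Y1 (φ σ) + -(24 * c ^ 3) * v σ ^ 5 * y (φ σ)
      + 36 * c ^ 4 * v σ ^ 4 with hg3
  have hyg : ytil = g0 := by
    rw [hytil, hg0]
    funext σ
    simp only [hvdef, hφdef, div_eq_mul_inv, ← inv_pow]
    ring
  -- pointwise HasDerivAt facts
  have hmem : ∀ τ ∈ Ω', c * τ + d ≠ 0 ∧ φ τ ∈ Ω := by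
    intro τ hτ; rw [hΩ'] at hτ; exact hτ
  have hDy : ∀ τ ∈ Ω', HasDerivAt y (Y1 (φ τ)) (φ τ) := fun τ hτ =>
    (hy.differentiableAt (hΩ.mem_nhds (hmem τ hτ).2)).hasDerivAt
  have hDY1 : ∀ τ ∈ Ω', HasDerivAt Y1 (Y2 (φ τ)) (φ τ) := fun τ hτ =>
    ((hA1 _ (hmem τ hτ).2).differentiableAt).hasDerivAt
  have hDY2 : ∀ τ ∈ Ω', HasDerivAt Y2 (Y3 (φ τ)) (φ τ) := fun τ hτ =>
    ((hA2 _ (hmem τ hτ).2).differentiableAt).hasDerivAt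
  have D0 : ∀ τ ∈ Ω', HasDerivAt g0 (g1 τ) τ := by
    intro τ hτ
    obtain ⟨h1, _⟩ := hmem τ hτ
    have A := hasDerivAt_T a b c d hdet 1 1 y Y1 τ h1 (hDy τ hτ)
    have B := hasDerivAt_P c d (-(6 * c)) 0 τ h1
    exact (A.add B).congr_deriv (by push_cast; simp only [hg1]; ring)
  have D1 : ∀ τ ∈ Ω', HasDerivAt g1 (g2 τ) τ := by
    intro τ hτ
    obtain ⟨h1, _⟩ := hmem τ hτ
    have A := hasDerivAt_T a b c d hdet 1 3 Y1 Y2 τ h1 (hDY1 τ hτ)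
    have B := hasDerivAt_T a b c d hdet (-(2 * c)) 2 y Y1 τ h1 (hDy τ hτ)
    have C := hasDerivAt_P c d (6 * c ^ 2) 1 τ h1
    exact ((A.add B).add C).congr_deriv (by push_cast; simp only [hg2]; ring)
  have D2 : ∀ τ ∈ Ω', HasDerivAt g2 (g3 τ) τ := by
    intro τ hτ
    obtain ⟨h1, _⟩ := hmem τ hτ
    have A := hasDerivAt_T a b c d hdet 1 5 Y2 Y3 τ h1 (hDY2 τ hτ)
    have B := hasDerivAt_T a b c d hdet (-(6 * c)) 4 Y1 Y2 τ h1 (hDY1 τ hτ)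
    have C := hasDerivAt_T a b c d hdet (6 * c ^ 2) 3 y Y1 τ h1 (hDy τ hτ)
    have D := hasDerivAt_P c d (-(12 * c ^ 3)) 2 τ h1
    exact (((A.add B).add C).add D).congr_deriv (by push_cast; simp only [hg3]; ring)
  -- derivative identification
  have hd1 : ∀ τ ∈ Ω', deriv ytil τ = g1 τ := by
    intro τ hτ; rw [hyg]; exact (D0 τ hτ).deriv
  have hd2 : ∀ τ ∈ Ω', deriv (deriv ytil) τ = g2 τ := by
    intro τ hτ
    have heq : deriv ytil =ᶠ[nhds τ] g1 :=
      Filter.eventuallyEq_of_mem (hopen'.mem_nhds hτ) hd1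
    rw [heq.deriv_eq]
    exact (D1 τ hτ).deriv
  have hd3 : ∀ τ ∈ Ω', deriv (deriv (deriv ytil)) τ = g3 τ := by
    intro τ hτ
    have heq : deriv (deriv ytil) =ᶠ[nhds τ] g2 :=
      Filter.eventuallyEq_of_mem (hopen'.mem_nhds hτ) hd2
    rw [heq.deriv_eq]
    exact (D2 τ hτ).deriv
  constructor
  · rw [hyg]
    exact fun τ hτ => ((D0 τ hτ).differentiableAt).differentiableWithinAt
  · intro τ hτ
    obtain ⟨h1, h2⟩ := hmem τ hτ
    rw [hd3 τ hτ, hd2 τ hτ, hd1 τ hτ, hyg]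
    have hch : Y3 (φ τ) = 2 * y (φ τ) * Y2 (φ τ) - 3 * (Y1 (φ τ)) ^ 2 := hchazy _ h2
    simp only [hg0, hg1, hg2, hg3]
    rw [hch]
    ring
end

section
/- Let Ω ⊆ ℂ be open and let y : ℂ → ℂ be holomorphic on Ω satisfying the Chazy equation y′′′ = 2y·y′′ − 3(y′)² on Ω. Define Q := y² − 6y′, R := y³ − 9y·y′ + 9y′′, and Δ := Q³ − R². Then on Ω the following identities hold: Q′ = (2/3)·(y·Q − R), R′ = y·R − Q², and Δ′ = 2y·Δ. -/
theorem stmt_9 (Ω : Set ℂ) (hΩ : IsOpen Ω) (y : ℂ → ℂ)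
    (hy : DifferentiableOn ℂ y Ω)
    (hchazy : ∀ τ ∈ Ω, deriv (deriv (deriv y)) τ
        = 2 * y τ * deriv (deriv y) τ - 3 * (deriv y τ) ^ 2)
    (Q R Δ : ℂ → ℂ)
    (hQ : Q = fun τ => y τ ^ 2 - 6 * deriv y τ)
    (hR : R = fun τ => y τ ^ 3 - 9 * y τ * deriv y τ + 9 * deriv (deriv y) τ)
    (hΔ : Δ = fun τ => Q τ ^ 3 - R τ ^ 2) :
    ∀ τ ∈ Ω,
      deriv Q τ = 2 / 3 * (y τ * Q τ - R τ) ∧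
      deriv R τ = y τ * R τ - Q τ ^ 2 ∧
      deriv Δ τ = 2 * y τ * Δ τ := by
  have hA : AnalyticOnNhd ℂ y Ω := hy.analyticOnNhd hΩ
  have hA1 : AnalyticOnNhd ℂ (deriv y) Ω := hA.deriv
  have hA2 : AnalyticOnNhd ℂ (deriv (deriv y)) Ω := hA1.deriv
  intro τ hτ
  have h0 : HasDerivAt y (deriv y τ) τ :=
    ((hA τ hτ).differentiableAt).hasDerivAt
  have h1 : HasDerivAt (deriv y) (deriv (deriv y) τ) τ :=
    ((hA1 τ hτ).differentiableAt).hasDerivAt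
  have h2 : HasDerivAt (deriv (deriv y)) (deriv (deriv (deriv y)) τ) τ :=
    ((hA2 τ hτ).differentiableAt).hasDerivAt
  have hQd : HasDerivAt Q (2 * y τ * deriv y τ - 6 * deriv (deriv y) τ) τ := by
    rw [hQ]
    have : HasDerivAt (fun τ => y τ ^ 2 - 6 * deriv y τ)
        (↑2 * y τ ^ (2 - 1) * deriv y τ - 6 * deriv (deriv y) τ) τ := ((h0.pow 2).sub (h1.const_mul 6))
    convert this using 1
    ring
  have hRd : HasDerivAt R (3 * y τ ^ 2 * deriv y τ
      - (9 * deriv y τ * deriv y τ + 9 * y τ * deriv (deriv y) τ)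
      + 9 * deriv (deriv (deriv y)) τ) τ := by
    rw [hR]
    exact (((h0.pow 3).sub ((h0.const_mul 9).mul h1)).add (h2.const_mul 9))
  have hQv : Q τ = y τ ^ 2 - 6 * deriv y τ := by rw [hQ]
  have hRv : R τ = y τ ^ 3 - 9 * y τ * deriv y τ + 9 * deriv (deriv y) τ := by rw [hR]
  have eQ : deriv Q τ = 2 / 3 * (y τ * Q τ - R τ) := by
    rw [hQd.deriv, hQv, hRv]; ring
  have eR : deriv R τ = y τ * R τ - Q τ ^ 2 := by
    rw [hRd.deriv, hchazy τ hτ, hQv, hRv]; ring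
  refine ⟨eQ, eR, ?_⟩
  have hΔd : HasDerivAt Δ
      (3 * Q τ ^ 2 * (2 / 3 * (y τ * Q τ - R τ)) - 2 * R τ * (y τ * R τ - Q τ ^ 2)) τ := by
    rw [hΔ]
    have hQd' : HasDerivAt Q (2 / 3 * (y τ * Q τ - R τ)) τ := by
      convert hQd using 1; rw [hQv, hRv]; ring
    have hRd' : HasDerivAt R (y τ * R τ - Q τ ^ 2) τ := by
      convert hRd using 1; rw [hchazy τ hτ, hQv, hRv]; ring
    have : HasDerivAt (fun τ => Q τ ^ 3 - R τ ^ 2) (↑3 * Q τ ^ (3 - 1) * (2 / 3 * (y τ * Q τ - R τ))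
        - ↑2 * R τ ^ (2 - 1) * (y τ * R τ - Q τ ^ 2)) τ := (hQd'.pow 3).sub (hRd'.pow 2)
    convert this using 1
    ring
  rw [hΔd.deriv, hΔ]
  ring
end

section
/- Let Ω ⊆ ℂ be open and let y : ℂ → ℂ be holomorphic on Ω satisfying the Chazy equation y′′′ = 2y·y′′ − 3(y′)² on Ω. Define Q := y² − 6y′, R := y³ − 9y·y′ + 9y′′, and Δ := Q³ − R². Assume Δ ≡ 0 on Ω (i.e. Q³ = R² identically on Ω) and Q(τ) ≠ 0 for all τ ∈ Ω. Then the function u := R/Q satisfies u² = Q and u³ = R on Ω, and the function w := y − u satisfies the Riccati equation w′ = w²/6 on Ω. -/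
private lemma key_ricc (a b c U U' : ℂ)
    (E1 : 2 * U * U' = 2 * a * b - 6 * c)
    (E2 : U * (a ^ 2 - 6 * b) = a ^ 3 - 9 * a * b + 9 * c)
    (E3 : U ^ 2 = a ^ 2 - 6 * b) (hU : U ≠ 0) :
    b - U' = (a - U) ^ 2 / 6 := by
  have h6 : U * (6 * (b - U') - (a - U) ^ 2) = 0 := by
    linear_combination (-3 : ℂ) * E1 + (2 * a - U) * E3 + (-2 : ℂ) * E2
  have h7 : 6 * (b - U') - (a - U) ^ 2 = 0 := by
    rcases mul_eq_zero.mp h6 with h | h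
    · exact absurd h hU
    · exact h
  linear_combination h7 / 6

theorem stmt_10 (Ω : Set ℂ) (hΩ : IsOpen Ω) (y : ℂ → ℂ)
    (hy : DifferentiableOn ℂ y Ω)
    (hchazy : ∀ τ ∈ Ω, deriv (deriv (deriv y)) τ
        = 2 * y τ * deriv (deriv y) τ - 3 * (deriv y τ) ^ 2)
    (Q R Δ : ℂ → ℂ)
    (hQ : Q = fun τ => y τ ^ 2 - 6 * deriv y τ)
    (hR : R = fun τ => y τ ^ 3 - 9 * y τ * deriv y τ + 9 * deriv (deriv y) τ)
    (hΔ : Δ = fun τ => Q τ ^ 3 - R τ ^ 2)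
    (hΔ0 : ∀ τ ∈ Ω, Δ τ = 0)
    (hQ0 : ∀ τ ∈ Ω, Q τ ≠ 0)
    (u w : ℂ → ℂ)
    (hu : u = fun τ => R τ / Q τ)
    (hw : w = fun τ => y τ - u τ) :
    (∀ τ ∈ Ω, u τ ^ 2 = Q τ ∧ u τ ^ 3 = R τ) ∧
      (∀ τ ∈ Ω, deriv w τ = w τ ^ 2 / 6) := by
  have hQR : ∀ τ ∈ Ω, Q τ ^ 3 = R τ ^ 2 := by
    intro τ hτ
    have h := hΔ0 τ hτ
    rw [hΔ] at h
    linear_combination h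
  have huQ : ∀ τ ∈ Ω, u τ * Q τ = R τ := by
    intro τ hτ
    rw [hu]
    exact div_mul_cancel₀ _ (hQ0 τ hτ)
  have hu2 : ∀ τ ∈ Ω, u τ ^ 2 = Q τ := by
    intro τ hτ
    have h : u τ ^ 2 * Q τ ^ 2 = Q τ * Q τ ^ 2 := by
      have h1 := huQ τ hτ
      have h2 := hQR τ hτ
      calc u τ ^ 2 * Q τ ^ 2 = (u τ * Q τ) ^ 2 := by ring
        _ = R τ ^ 2 := by rw [h1]
        _ = Q τ ^ 3 := h2.symm
        _ = Q τ * Q τ ^ 2 := by ring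
    exact mul_right_cancel₀ (pow_ne_zero 2 (hQ0 τ hτ)) h
  have hu3 : ∀ τ ∈ Ω, u τ ^ 3 = R τ := by
    intro τ hτ
    have h : u τ ^ 3 * Q τ ^ 3 = R τ * Q τ ^ 3 := by
      have h1 := huQ τ hτ
      have h2 := hQR τ hτ
      calc u τ ^ 3 * Q τ ^ 3 = (u τ * Q τ) ^ 3 := by ring
        _ = R τ ^ 3 := by rw [h1]
        _ = R τ * R τ ^ 2 := by ring
        _ = R τ * Q τ ^ 3 := by rw [h2]
    exact mul_right_cancel₀ (pow_ne_zero 3 (hQ0 τ hτ)) h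
  -- analyticity
  have hA : AnalyticOnNhd ℂ y Ω := hy.analyticOnNhd hΩ
  have hA' : AnalyticOnNhd ℂ (deriv y) Ω := hA.deriv_of_isOpen hΩ
  have hA'' : AnalyticOnNhd ℂ (deriv (deriv y)) Ω := hA'.deriv_of_isOpen hΩ
  refine ⟨fun τ hτ => ⟨hu2 τ hτ, hu3 τ hτ⟩, fun τ hτ => ?_⟩
  have hdy : DifferentiableAt ℂ y τ := (hA τ hτ).differentiableAt
  have hdy' : DifferentiableAt ℂ (deriv y) τ := (hA' τ hτ).differentiableAt
  have hdy'' : DifferentiableAt ℂ (deriv (deriv y)) τ := (hA'' τ hτ).differentiableAt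
  have hdQ : DifferentiableAt ℂ Q τ := by
    rw [hQ]; exact (hdy.pow 2).sub (hdy'.const_mul 6)
  have hdR : DifferentiableAt ℂ R τ := by
    rw [hR]; exact ((hdy.pow 3).sub ((hdy.const_mul 9).mul hdy')).add (hdy''.const_mul 9)
  have hdu : DifferentiableAt ℂ u τ := by
    rw [hu]; exact hdR.div hdQ (hQ0 τ hτ)
  have hU : u τ ≠ 0 := by
    intro h
    apply hQ0 τ hτ
    rw [← hu2 τ hτ, h]; ring
  -- derivative of Q
  have hQ' : HasDerivAt Q (2 * y τ * deriv y τ - 6 * deriv (deriv y) τ) τ := by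
    rw [hQ]
    have h1 : HasDerivAt (fun t => y t ^ 2) (2 * y τ * deriv y τ) τ := by
      have := (hdy.hasDerivAt).pow 2
      exact this.congr_deriv (by push_cast; ring)
    have h2 : HasDerivAt (fun t => 6 * deriv y t) (6 * deriv (deriv y) τ) τ :=
      (hdy'.hasDerivAt).const_mul 6
    exact h1.sub h2
  -- derivative of u² = derivative of Q
  have hev : (fun t => u t ^ 2) =ᶠ[nhds τ] Q := by
    filter_upwards [hΩ.mem_nhds hτ] with t ht using hu2 t ht
  have hder1 : deriv (fun t => u t ^ 2) τ = 2 * u τ * deriv u τ := by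
    have := (hdu.hasDerivAt).pow 2
    exact (this.congr_deriv (by push_cast; ring)).deriv
  have E1 : 2 * u τ * deriv u τ = 2 * y τ * deriv y τ - 6 * deriv (deriv y) τ := by
    rw [← hder1, hev.deriv_eq, hQ'.deriv]
  have E2 : u τ * (y τ ^ 2 - 6 * deriv y τ)
      = y τ ^ 3 - 9 * y τ * deriv y τ + 9 * deriv (deriv y) τ := by
    have := huQ τ hτ
    rw [hQ, hR] at this
    exact this
  have E3 : u τ ^ 2 = y τ ^ 2 - 6 * deriv y τ := by
    have := hu2 τ hτ
    rw [hQ] at this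
    exact this
  have hdw : deriv w τ = deriv y τ - deriv u τ := by
    rw [hw]; exact deriv_sub hdy hdu
  rw [hdw, hw]
  exact key_ricc (y τ) (deriv y τ) (deriv (deriv y) τ) (u τ) (deriv u τ) E1 E2 E3 hU
end

section
/- Let Ω ⊆ ℂ be open and let y : ℂ → ℂ be holomorphic on Ω satisfying the Chazy equation y′′′ = 2y·y′′ − 3(y′)² on Ω. Define Q := y² − 6y′, R := y³ − 9y·y′ + 9y′′, and Δ := Q³ − R², and assume Δ(τ) ≠ 0 for all τ ∈ Ω. Set t := −R²/Δ. Then on Ω the identity 64·t³·(1−t)⁴·Δ = −(t′)⁶ holds. -/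
theorem stmt_12 (Ω : Set ℂ) (hΩ : IsOpen Ω) (y : ℂ → ℂ)
    (hy : DifferentiableOn ℂ y Ω)
    (hchazy : ∀ τ ∈ Ω, deriv (deriv (deriv y)) τ
        = 2 * y τ * deriv (deriv y) τ - 3 * (deriv y τ) ^ 2)
    (Q R Δ : ℂ → ℂ)
    (hQ : Q = fun τ => y τ ^ 2 - 6 * deriv y τ)
    (hR : R = fun τ => y τ ^ 3 - 9 * y τ * deriv y τ + 9 * deriv (deriv y) τ)
    (hΔ : Δ = fun τ => Q τ ^ 3 - R τ ^ 2)
    (hΔ0 : ∀ τ ∈ Ω, Δ τ ≠ 0)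
    (t : ℂ → ℂ) (ht : t = fun τ => -(R τ ^ 2) / Δ τ) :
    ∀ τ ∈ Ω, 64 * t τ ^ 3 * (1 - t τ) ^ 4 * Δ τ = -(deriv t τ) ^ 6 := by
  intro τ hτ
  have hA : AnalyticOnNhd ℂ y Ω := hy.analyticOnNhd hΩ
  have hA1 : AnalyticOnNhd ℂ (deriv y) Ω := hA.deriv
  have hA2 : AnalyticOnNhd ℂ (deriv (deriv y)) Ω := hA1.deriv
  have hyd : HasDerivAt y (deriv y τ) τ := (hA τ hτ).differentiableAt.hasDerivAt
  have hy1d : HasDerivAt (deriv y) (deriv (deriv y) τ) τ :=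
    (hA1 τ hτ).differentiableAt.hasDerivAt
  have hy2d : HasDerivAt (deriv (deriv y)) (deriv (deriv (deriv y)) τ) τ :=
    (hA2 τ hτ).differentiableAt.hasDerivAt
  set a := y τ with ha
  set b := deriv y τ with hb
  set c := deriv (deriv y) τ with hc
  have hd : deriv (deriv (deriv y)) τ = 2 * a * c - 3 * b ^ 2 := hchazy τ hτ
  have hQd : HasDerivAt Q (2 * a * b - 6 * c) τ := by
    rw [hQ]
    convert (hyd.pow 2).sub (hy1d.const_mul 6) using 1
    · rfl
    · rfl
    · rfl
    · simp only [ha, hb, hc]; norm_num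
  have hRd : HasDerivAt R (3 * a ^ 2 * b - 9 * b ^ 2 - 9 * a * c
      + 9 * (2 * a * c - 3 * b ^ 2)) τ := by
    rw [hR]
    have := ((hyd.pow 3).sub ((hyd.mul hy1d).const_mul 9)).add (hy2d.const_mul 9)
    rw [hd] at this
    convert this using 1
    · rfl
    · rfl
    · funext x; simp only [Pi.add_apply, Pi.sub_apply, Pi.pow_apply, Pi.mul_apply]; ring
    · simp only [ha, hb, hc]; norm_num; ring
  have hΔd : HasDerivAt Δ (3 * Q τ ^ 2 * (2 * a * b - 6 * c)
      - 2 * R τ * (3 * a ^ 2 * b - 9 * b ^ 2 - 9 * a * c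
        + 9 * (2 * a * c - 3 * b ^ 2))) τ := by
    rw [hΔ]
    convert (hQd.pow 3).sub (hRd.pow 2) using 1
    · rfl
    · rfl
    · rfl
    · norm_num
  have hΔτ : Δ τ ≠ 0 := hΔ0 τ hτ
  have htd : HasDerivAt t
      ((-(2 * R τ * (3 * a ^ 2 * b - 9 * b ^ 2 - 9 * a * c
          + 9 * (2 * a * c - 3 * b ^ 2))) * Δ τ
        - (-(R τ ^ 2)) * (3 * Q τ ^ 2 * (2 * a * b - 6 * c)
          - 2 * R τ * (3 * a ^ 2 * b - 9 * b ^ 2 - 9 * a * c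
            + 9 * (2 * a * c - 3 * b ^ 2)))) / Δ τ ^ 2) τ := by
    rw [ht]
    convert ((hRd.pow 2).neg).div hΔd hΔτ using 1
    · rfl
    · rfl
    · rfl
    · simp only [Pi.neg_apply, Pi.pow_apply]; norm_num
  have hQτ : Q τ = a ^ 2 - 6 * b := by rw [hQ]
  have hRτ : R τ = a ^ 3 - 9 * a * b + 9 * c := by rw [hR]
  have hΔτ' : Δ τ = Q τ ^ 3 - R τ ^ 2 := by rw [hΔ]
  have key : deriv t τ = 2 * R τ * Q τ ^ 2 / Δ τ := by
    rw [htd.deriv, hΔτ', hQτ, hRτ]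
    have hne : (a ^ 2 - 6 * b) ^ 3 - (a ^ 3 - 9 * a * b + 9 * c) ^ 2 ≠ 0 := by
      rw [← hQτ, ← hRτ, ← hΔτ']; exact hΔτ
    rw [div_eq_div_iff (pow_ne_zero 2 hne) hne]
    ring
  have htτ : t τ = -(R τ ^ 2) / Δ τ := by rw [ht]
  have hQ3 : Q τ ^ 3 - R τ ^ 2 ≠ 0 := by rw [← hΔτ']; exact hΔτ
  rw [htτ, key, hΔτ']
  field_simp
  ring
end

section
/- Let ζ₁, ζ₂, η₁, η₂, α, g₂, g₃ ∈ ℂ with ζ₁ ≠ ζ₂, and suppose η₁² = (ζ₁+α)³ − (g₂/4)(ζ₁+α) − g₃/4 and η₂² = (ζ₂+α)³ − (g₂/4)(ζ₂+α) − g₃/4. Define Θ₀ = 16(ζ₁−ζ₂)², Θ₁ = 8·(2g₃ + g₂(ζ₁+ζ₂+2α) − 4·(ζ₁ζ₂(ζ₁+ζ₂) + 6ζ₁ζ₂α + 3(ζ₁+ζ₂)α² + 2α³)), and Θ₂ = (g₂+4ζ₁ζ₂)² + 16g₂(ζ₁+ζ₂)α + 24(g₂−4ζ₁ζ₂)α²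 − 64(ζ₁+ζ₂)α³ − 48α⁴ + 16g₃(ζ₁+ζ₂+3α). Set z₃⁺ := −ζ₁ − ζ₂ − 3α + ((η₁+η₂)/(ζ₁−ζ₂))² and z₃⁻ := −ζ₁ − ζ₂ − 3α + ((η₁−η₂)/(ζ₁−ζ₂))². Then for every z ∈ ℂ, Θ₀z² + Θ₁z + Θ₂ = Θ₀·(z − z₃⁺)·(z − z₃⁻); equivalently, z₃⁺ + z₃⁻ = −Θ₁/Θ₀ and z₃⁺·z₃⁻ = Θ₂/Θ₀. -/
theorem stmt_16 (ζ₁ ζ₂ η₁ η₂ α g₂ g₃ : ℂ) (hne : ζ₁ ≠ ζ₂)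
    (h1 : η₁ ^ 2 = (ζ₁ + α) ^ 3 - g₂ / 4 * (ζ₁ + α) - g₃ / 4)
    (h2 : η₂ ^ 2 = (ζ₂ + α) ^ 3 - g₂ / 4 * (ζ₂ + α) - g₃ / 4)
    (Θ₀ Θ₁ Θ₂ z₃p z₃m : ℂ)
    (hΘ₀ : Θ₀ = 16 * (ζ₁ - ζ₂) ^ 2)
    (hΘ₁ : Θ₁ = 8 * (2 * g₃ + g₂ * (ζ₁ + ζ₂ + 2 * α)
        - 4 * (ζ₁ * ζ₂ * (ζ₁ + ζ₂) + 6 * ζ₁ * ζ₂ * α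
            + 3 * (ζ₁ + ζ₂) * α ^ 2 + 2 * α ^ 3)))
    (hΘ₂ : Θ₂ = (g₂ + 4 * ζ₁ * ζ₂) ^ 2 + 16 * g₂ * (ζ₁ + ζ₂) * α
        + 24 * (g₂ - 4 * ζ₁ * ζ₂) * α ^ 2 - 64 * (ζ₁ + ζ₂) * α ^ 3 - 48 * α ^ 4
        + 16 * g₃ * (ζ₁ + ζ₂ + 3 * α))
    (hzp : z₃p = -ζ₁ - ζ₂ - 3 * α + ((η₁ + η₂) / (ζ₁ - ζ₂)) ^ 2)
    (hzm : z₃m = -ζ₁ - ζ₂ - 3 * α + ((η₁ - η₂) / (ζ₁ - ζ₂)) ^ 2) :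
    (∀ z : ℂ, Θ₀ * z ^ 2 + Θ₁ * z + Θ₂ = Θ₀ * (z - z₃p) * (z - z₃m)) ∧
      z₃p + z₃m = -Θ₁ / Θ₀ ∧ z₃p * z₃m = Θ₂ / Θ₀ := by
  have hd : ζ₁ - ζ₂ ≠ 0 := sub_ne_zero.mpr hne
  have hd2 : (ζ₁ - ζ₂) ^ 2 ≠ 0 := pow_ne_zero _ hd
  have hΘ₀ne : Θ₀ ≠ 0 := by
    rw [hΘ₀]; exact mul_ne_zero (by norm_num) hd2
  have hp : ((η₁ + η₂) / (ζ₁ - ζ₂)) ^ 2 * (ζ₁ - ζ₂) ^ 2 = (η₁ + η₂) ^ 2 := by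
    rw [div_pow, div_mul_cancel₀ _ hd2]
  have hq : ((η₁ - η₂) / (ζ₁ - ζ₂)) ^ 2 * (ζ₁ - ζ₂) ^ 2 = (η₁ - η₂) ^ 2 := by
    rw [div_pow, div_mul_cancel₀ _ hd2]
  have Hsum : Θ₀ * (z₃p + z₃m) = -Θ₁ := by
    subst hzp hzm hΘ₀ hΘ₁
    linear_combination (16 : ℂ) * hp + 16 * hq + 32 * h1 + 32 * h2
  have Hprod : Θ₀ * (z₃p * z₃m) = Θ₂ := by
    apply mul_right_cancel₀ hd2
    subst hzp hzm hΘ₀ hΘ₂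
    linear_combination
      (16 * (-ζ₁ - ζ₂ - 3 * α) * (ζ₁ - ζ₂) ^ 2
          + 16 * ((η₁ - η₂) / (ζ₁ - ζ₂)) ^ 2 * (ζ₁ - ζ₂) ^ 2) * hp
        + (16 * (-ζ₁ - ζ₂ - 3 * α) * (ζ₁ - ζ₂) ^ 2 + 16 * (η₁ + η₂) ^ 2) * hq
        + (32 * (-ζ₁ - ζ₂ - 3 * α) * (ζ₁ - ζ₂) ^ 2
            + 16 * (η₁ ^ 2 - η₂ ^ 2 + ((ζ₁ + α) ^ 3 - g₂ / 4 * (ζ₁ + α))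
                - ((ζ₂ + α) ^ 3 - g₂ / 4 * (ζ₂ + α)))) * h1
        + (32 * (-ζ₁ - ζ₂ - 3 * α) * (ζ₁ - ζ₂) ^ 2
            - 16 * (η₁ ^ 2 - η₂ ^ 2 + ((ζ₁ + α) ^ 3 - g₂ / 4 * (ζ₁ + α))
                - ((ζ₂ + α) ^ 3 - g₂ / 4 * (ζ₂ + α)))) * h2
  refine ⟨fun z => ?_, ?_, ?_⟩
  · have h : Θ₀ * (z - z₃p) * (z - z₃m)
        = Θ₀ * z ^ 2 - (Θ₀ * (z₃p + z₃m)) * z + Θ₀ * (z₃p * z₃m) := by ring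
    rw [h, Hsum, Hprod]; ring
  · field_simp
    linear_combination Hsum
  · field_simp
    linear_combination Hprod
end

section
/- Let U ⊆ ℂ be a nonempty open set and let e₂, e₄, e₆ : ℂ → ℂ be holomorphic on U satisfying the Ramanujan system D e₂ = (e₂² − e₄)/12, D e₄ = (e₂e₄ − e₆)/3, D e₆ = (e₂e₆ − e₄²)/2 on U, where D denotes the scaled derivative D f = (2πi)⁻¹·f′. Then y := e₂ satisfies the Chazy III equation D³y = y·D²y − (3/2)·(Dy)² on U. -/
theorem stmt_18 (U : Set ℂ) (hUopen : IsOpen U) (hUne : U.Nonempty)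
    (e₂ e₄ e₆ : ℂ → ℂ)
    (h2 : DifferentiableOn ℂ e₂ U) (h4 : DifferentiableOn ℂ e₄ U)
    (h6 : DifferentiableOn ℂ e₆ U)
    (hR2 : ∀ z ∈ U, D e₂ z = (e₂ z ^ 2 - e₄ z) / 12)
    (hR4 : ∀ z ∈ U, D e₄ z = (e₂ z * e₄ z - e₆ z) / 3)
    (hR6 : ∀ z ∈ U, D e₆ z = (e₂ z * e₆ z - e₄ z ^ 2) / 2) :
    ∀ z ∈ U,
      D (D (D e₂)) z = e₂ z * D (D e₂) z - 3 / 2 * (D e₂ z) ^ 2 := by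
  have key2 : ∀ w ∈ U, D (D e₂) w =
      (e₂ w ^ 3 - 3 * (e₂ w * e₄ w) + 2 * e₆ w) / 72 := by
    intro w hw
    have hw' : U ∈ nhds w := hUopen.mem_nhds hw
    have h2w : HasDerivAt e₂ (deriv e₂ w) w := (h2.differentiableAt hw').hasDerivAt
    have h4w : HasDerivAt e₄ (deriv e₄ w) w := (h4.differentiableAt hw').hasDerivAt
    have hg : HasDerivAt (fun x => (e₂ x ^ 2 - e₄ x) / 12)
        ((2 * e₂ w * deriv e₂ w - deriv e₄ w) / 12) w := by
      have := ((h2w.pow 2).sub h4w).div_const 12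
      exact this.congr_deriv (by push_cast; ring)
    have heq : D e₂ =ᶠ[nhds w] fun x => (e₂ x ^ 2 - e₄ x) / 12 :=
      Filter.eventuallyEq_of_mem hw' hR2
    have hderiv : deriv (D e₂) w = (2 * e₂ w * deriv e₂ w - deriv e₄ w) / 12 := by
      rw [heq.deriv_eq, hg.deriv]
    have hD2 := hR2 w hw
    have hD4 := hR4 w hw
    simp only [D] at hD2 hD4 ⊢
    rw [hderiv]
    linear_combination (e₂ w / 6) * hD2 - (1 / 12 : ℂ) * hD4
  intro z hz
  have hz' : U ∈ nhds z := hUopen.mem_nhds hz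
  have h2z : HasDerivAt e₂ (deriv e₂ z) z := (h2.differentiableAt hz').hasDerivAt
  have h4z : HasDerivAt e₄ (deriv e₄ z) z := (h4.differentiableAt hz').hasDerivAt
  have h6z : HasDerivAt e₆ (deriv e₆ z) z := (h6.differentiableAt hz').hasDerivAt
  have hg : HasDerivAt (fun x => (e₂ x ^ 3 - 3 * (e₂ x * e₄ x) + 2 * e₆ x) / 72)
      ((3 * e₂ z ^ 2 * deriv e₂ z
        - 3 * (deriv e₂ z * e₄ z + e₂ z * deriv e₄ z)
        + 2 * deriv e₆ z) / 72) z := by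
    have := (((h2z.pow 3).sub ((h2z.mul h4z).const_mul 3)).add
      (h6z.const_mul 2)).div_const 72
    exact this.congr_deriv (by push_cast; ring)
  have heq : D (D e₂) =ᶠ[nhds z]
      fun x => (e₂ x ^ 3 - 3 * (e₂ x * e₄ x) + 2 * e₆ x) / 72 :=
    Filter.eventuallyEq_of_mem hz' key2
  have hderiv : deriv (D (D e₂)) z =
      (3 * e₂ z ^ 2 * deriv e₂ z
        - 3 * (deriv e₂ z * e₄ z + e₂ z * deriv e₄ z)
        + 2 * deriv e₆ z) / 72 := by
    rw [heq.deriv_eq, hg.deriv]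
  have hD2 := hR2 z hz
  have hD4 := hR4 z hz
  have hD6 := hR6 z hz
  rw [key2 z hz]
  simp only [D] at hD2 hD4 hD6 ⊢
  rw [hderiv]
  have hD2sq : ((2 * (Real.pi : ℂ) * Complex.I)⁻¹ * deriv e₂ z) ^ 2
      = ((e₂ z ^ 2 - e₄ z) / 12) ^ 2 := by rw [hD2]
  linear_combination ((3 * e₂ z ^ 2 - 3 * e₄ z) / 72) * hD2
    - (e₂ z / 24) * hD4 + (1 / 36 : ℂ) * hD6 + (3 / 2 : ℂ) * hD2sq
end
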